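/- Let g(u) = (cos(u tan θ) - cos θ) sec²θ for |u| ≤ θ/tan θ and g(u) = 0 otherwise, where 0 < θ < π/2, and let w = g * g be the convolution of g with itself. Then w(0) = ∫_{-∞}^{∞} g(u)² du = sec²θ (θ tan θ + 3θ cot θ - 3). -/

import Mathlib

open Real

theorem conv_square_at_zero (θ : ℝ) (h0 : 0 < θ) (h1 : θ < π / 2)
    (g : ℝ → ℝ)
    (hg : ∀ u : ℝ, g u = if |u| ≤ θ / Real.tan θ then
        (Real.cos (u * Real.tan θ) - Real.cos θ) / Real.cos θ ^ 2 else 0) :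
    (∫ v : ℝ, g v * g (0 - v)) = ∫ u : ℝ, g u ^ 2 ∧
    (∫ u : ℝ, g u ^ 2)
      = (θ * Real.tan θ + 3 * θ / Real.tan θ - 3) / Real.cos θ ^ 2 := by
  have hc : 0 < Real.cos θ := Real.cos_pos_of_mem_Ioo ⟨by linarith [Real.pi_pos], h1⟩
  have hs : 0 < Real.sin θ := Real.sin_pos_of_pos_of_lt_pi h0 (by linarith [Real.pi_pos])
  have ht : 0 < Real.tan θ := Real.tan_pos_of_pos_of_lt_pi_div_two h0 h1
  set t := Real.tan θ with htdef
  set c := Real.cos θ with hcdef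
  set a := θ / t with hadef
  have ha : 0 < a := div_pos h0 ht
  have hat : a * t = θ := div_mul_cancel₀ θ (ne_of_gt ht)
  constructor
  · congr 1
    funext v
    have : g (0 - v) = g v := by
      rw [hg, hg]
      simp [abs_neg, neg_mul, Real.cos_neg]
    rw [this]; ring
  · have hindic : (fun u => g u ^ 2) = Set.indicator (Set.Icc (-a) a)
        (fun u => ((Real.cos (u * t) - c) / c ^ 2) ^ 2) := by
      funext u
      rw [hg]
      by_cases h : |u| ≤ a
      · rw [if_pos h, Set.indicator_of_mem (Set.mem_Icc.mpr (abs_le.mp h))]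
      · rw [if_neg h, Set.indicator_of_notMem]
        · norm_num
        · simpa [Set.mem_Icc, abs_le] using h
    have step1 : (∫ u : ℝ, g u ^ 2) = ∫ u in (-a)..a, ((Real.cos (u * t) - c) / c ^ 2) ^ 2 := by
      rw [hindic, MeasureTheory.integral_indicator measurableSet_Icc,
        MeasureTheory.integral_Icc_eq_integral_Ioc,
        ← intervalIntegral.integral_of_le (by linarith : -a ≤ a)]
    have hcont : Continuous fun u : ℝ => ((Real.cos (u * t) - c) / c ^ 2) ^ 2 := by
      exact (((Real.continuous_cos.comp (continuous_id.mul continuous_const)).sub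
        continuous_const).div_const _).pow 2
    have hderiv : ∀ u : ℝ, HasDerivAt
        (fun u => (u / 2 + Real.sin (u * (2 * t)) / (4 * t) - (2 * c / t) * Real.sin (u * t)
          + c ^ 2 * u) / c ^ 4)
        (((Real.cos (u * t) - c) / c ^ 2) ^ 2) u := by
      intro u
      have h1 : HasDerivAt (fun u : ℝ => u * (2 * t)) (2 * t) u := by
        simpa using (hasDerivAt_id u).mul_const (2 * t)
      have h2 := (Real.hasDerivAt_sin (u * (2 * t))).comp u h1
      have h3 : HasDerivAt (fun u : ℝ => u * t) t u := by
        simpa using (hasDerivAt_id u).mul_const t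
      have h4 := (Real.hasDerivAt_sin (u * t)).comp u h3
      have h5 := (((((hasDerivAt_id u).div_const 2).add (h2.div_const (4 * t))).sub
        (h4.const_mul (2 * c / t))).add ((hasDerivAt_id u).const_mul (c ^ 2))).div_const (c ^ 4)
      refine h5.congr_deriv ?_
      have hcos2 : Real.cos (u * (2 * t)) = 2 * Real.cos (u * t) ^ 2 - 1 := by
        rw [show u * (2 * t) = 2 * (u * t) by ring, Real.cos_two_mul]
      rw [hcos2]
      field_simp
      ring
    have step2 : (∫ u in (-a)..a, ((Real.cos (u * t) - c) / c ^ 2) ^ 2)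
        = ((a / 2 + Real.sin (a * (2 * t)) / (4 * t) - (2 * c / t) * Real.sin (a * t)
            + c ^ 2 * a) / c ^ 4)
          - ((-a / 2 + Real.sin (-a * (2 * t)) / (4 * t) - (2 * c / t) * Real.sin (-a * t)
            + c ^ 2 * -a) / c ^ 4) := by
      rw [intervalIntegral.integral_eq_sub_of_hasDerivAt (fun x _ => hderiv x)
        (hcont.intervalIntegrable _ _)]
    rw [step1, step2]
    have h2t : a * (2 * t) = 2 * θ := by rw [show a * (2 * t) = 2 * (a * t) by ring, hat]
    rw [show (-a) * (2 * t) = -(a * (2 * t)) by ring, show (-a) * t = -(a * t) by ring,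
      h2t, hat, Real.sin_neg, Real.sin_neg, Real.sin_two_mul]
    rw [htdef, Real.tan_eq_sin_div_cos, ← hcdef]
    have hadef2 : a = θ * c / Real.sin θ := by
      rw [hadef, htdef, Real.tan_eq_sin_div_cos, ← hcdef]
      field_simp
    rw [hadef2]
    have hpy : Real.sin θ ^ 2 + c ^ 2 = 1 := Real.sin_sq_add_cos_sq θ
    field_simp
    linear_combination (-8 * θ) * hpy
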